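/- Let Q be a unital complex *-algebra with coproduct Δ, let C ∈ Mₙ(ℂ) be a unitary matrix, and let T'₁,…,T'ₙ be 3×3 matrices with entries in Q satisfying Δ((T'ₘ)_{jl}) = Σ_k (T'ₘ)_{jk} ⊗ (T'ₘ)_{kl}. Define X_{r,s,j,k} := Σ_{m=1}ⁿ C_{rm} (conj C_{sm}) (T'ₘ)_{j,k} for r,s = 1,…,n and j,k = 1,2,3. Then Δ(X_{r,s,j,k}) = Σ_{l=1}³ Σ_{p=1}ⁿ X_{r,p,j,l} ⊗ X_{p,s,l,k}. Consequently, the two-sided ideal I generated by the elements X_{r,s,j,k} with r ≠ s satisfies Δ(I) ⊆ I ⊗ Q + Q ⊗ I (indeed Δ(I) ⊆ span of I ⊗ I terms plus diagonal terms which again lie in I⊗Q + Q⊗I). -/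

import Mathlib

open TensorProduct

/-- With `C` a unitary `n×n` complex matrix and `T'ₘ` corepresentation-like `3×3`
matrices over `Q`, the elements `X_{r,s,j,k} := Σₘ C_{rm} conj(C_{sm}) (T'ₘ)_{jk}`
satisfy `Δ(X_{r,s,j,k}) = Σ_{l,p} X_{r,p,j,l} ⊗ X_{p,s,l,k}`, and the ideal generated
by the `X_{r,s,j,k}` with `r ≠ s` satisfies `Δ(I) ⊆ I ⊗ Q + Q ⊗ I`. -/
theorem ckm_ideal_coproduct {n : ℕ} {Q : Type*} [Ring Q] [StarRing Q]
    [Algebra ℂ Q] [StarModule ℂ Q]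
    (Δ : Q →ₐ[ℂ] Q ⊗[ℂ] Q)
    (C : Matrix (Fin n) (Fin n) ℂ)
    (hC1 : C * C.conjTranspose = 1) (hC2 : C.conjTranspose * C = 1)
    (T : Fin n → Matrix (Fin 3) (Fin 3) Q)
    (hT : ∀ m j l, Δ (T m j l) = ∑ k, T m j k ⊗ₜ[ℂ] T m k l)
    (X : Fin n → Fin n → Fin 3 → Fin 3 → Q)
    (hX : ∀ r s j k, X r s j k = ∑ m, (C r m * star (C s m)) • T m j k)
    (I : Ideal Q) (hI : I = Ideal.span {x | ∃ r s j k, r ≠ s ∧ x = X r s j k}) :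
    (∀ r s j k, Δ (X r s j k) = ∑ l, ∑ p, X r p j l ⊗ₜ[ℂ] X p s l k) ∧
    (∀ q ∈ I, Δ q ∈
      LinearMap.range (TensorProduct.map (Submodule.subtype (I.restrictScalars ℂ))
          (LinearMap.id (R := ℂ) (M := Q))) ⊔
      LinearMap.range (TensorProduct.map (LinearMap.id (R := ℂ) (M := Q))
          (Submodule.subtype (I.restrictScalars ℂ)))) := by
  have hδ : ∀ m m' : Fin n, ∑ p, star (C p m) * C p m' = if m = m' then 1 else 0 := by
    intro m m'
    have := congrFun (congrFun hC2 m) m'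
    simpa [Matrix.mul_apply, Matrix.conjTranspose_apply, Matrix.one_apply] using this
  have key : ∀ r s j k, Δ (X r s j k) = ∑ l, ∑ p, X r p j l ⊗ₜ[ℂ] X p s l k := by
    intro r s j k
    have lhs : Δ (X r s j k)
        = ∑ l, ∑ m, (C r m * star (C s m)) • (T m j l ⊗ₜ[ℂ] T m l k) := by
      rw [hX, map_sum]
      simp only [map_smul, hT, Finset.smul_sum]
      exact Finset.sum_comm
    rw [lhs]
    refine Finset.sum_congr rfl fun l _ => ?_
    have expand : ∀ p, X r p j l ⊗ₜ[ℂ] X p s l k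
        = ∑ m, ∑ m', ((star (C p m) * C p m') * (C r m * star (C s m'))) •
            (T m j l ⊗ₜ[ℂ] T m' l k) := by
      intro p
      rw [hX, hX, TensorProduct.sum_tmul]
      refine Finset.sum_congr rfl fun m _ => ?_
      rw [TensorProduct.tmul_sum]
      refine Finset.sum_congr rfl fun m' _ => ?_
      rw [TensorProduct.tmul_smul, TensorProduct.smul_tmul', smul_smul]
      congr 1
      ring
    rw [Finset.sum_congr rfl fun p _ => expand p]
    rw [Finset.sum_comm]
    refine Finset.sum_congr rfl fun m _ => ?_
    rw [Finset.sum_comm]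
    have : ∀ m', ∑ p, ((star (C p m) * C p m') * (C r m * star (C s m'))) •
            (T m j l ⊗ₜ[ℂ] T m' l k)
        = ((if m = m' then (1:ℂ) else 0) * (C r m * star (C s m'))) •
            (T m j l ⊗ₜ[ℂ] T m' l k) := by
      intro m'
      rw [← hδ m m', Finset.sum_mul, ← Finset.sum_smul]
    rw [Finset.sum_congr rfl fun m' _ => this m']
    simp [Finset.sum_ite_eq, mul_comm]
  refine ⟨key, ?_⟩
  set R1 := LinearMap.range (TensorProduct.map (Submodule.subtype (I.restrictScalars ℂ))
          (LinearMap.id (R := ℂ) (M := Q))) with hR1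
  set R2 := LinearMap.range (TensorProduct.map (LinearMap.id (R := ℂ) (M := Q))
          (Submodule.subtype (I.restrictScalars ℂ))) with hR2
  have hmem1 : ∀ (a : Q) (b : Q), a ∈ I → a ⊗ₜ[ℂ] b ∈ R1 := fun a b ha =>
    ⟨(⟨a, ha⟩ : I.restrictScalars ℂ) ⊗ₜ[ℂ] b, rfl⟩
  have hmem2 : ∀ (a : Q) (b : Q), b ∈ I → a ⊗ₜ[ℂ] b ∈ R2 := fun a b hb =>
    ⟨a ⊗ₜ[ℂ] (⟨b, hb⟩ : I.restrictScalars ℂ), rfl⟩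
  -- left multiplication stability
  have hmul1 : ∀ (z y : Q ⊗[ℂ] Q), y ∈ R1 → z * y ∈ R1 := by
    rintro z y ⟨t, rfl⟩
    induction t using TensorProduct.induction_on with
    | zero => simpa using R1.zero_mem
    | tmul a b =>
        simp only [TensorProduct.map_tmul, Submodule.coe_subtype, LinearMap.id_apply]
        induction z using TensorProduct.induction_on with
        | zero => simpa using R1.zero_mem
        | tmul c d =>
            rw [Algebra.TensorProduct.tmul_mul_tmul]
            exact hmem1 _ _ (I.mul_mem_left c a.2)
        | add z1 z2 h1 h2 => rw [add_mul]; exact R1.add_mem h1 h2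
    | add t1 t2 h1 h2 =>
        rw [map_add, mul_add]; exact R1.add_mem h1 h2
  have hmul2 : ∀ (z y : Q ⊗[ℂ] Q), y ∈ R2 → z * y ∈ R2 := by
    rintro z y ⟨t, rfl⟩
    induction t using TensorProduct.induction_on with
    | zero => simpa using R2.zero_mem
    | tmul a b =>
        simp only [TensorProduct.map_tmul, Submodule.coe_subtype, LinearMap.id_apply]
        induction z using TensorProduct.induction_on with
        | zero => simpa using R2.zero_mem
        | tmul c d =>
            rw [Algebra.TensorProduct.tmul_mul_tmul]
            exact hmem2 _ _ (I.mul_mem_left d b.2)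
        | add z1 z2 h1 h2 => rw [add_mul]; exact R2.add_mem h1 h2
    | add t1 t2 h1 h2 =>
        rw [map_add, mul_add]; exact R2.add_mem h1 h2
  have hmul : ∀ (z y : Q ⊗[ℂ] Q), y ∈ R1 ⊔ R2 → z * y ∈ R1 ⊔ R2 := by
    intro z y hy
    rcases Submodule.mem_sup.1 hy with ⟨y1, h1, y2, h2, rfl⟩
    rw [mul_add]
    exact Submodule.add_mem _ (Submodule.mem_sup_left (hmul1 z y1 h1))
      (Submodule.mem_sup_right (hmul2 z y2 h2))
  have hXI : ∀ r s j k, r ≠ s → X r s j k ∈ I := by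
    intro r s j k h
    rw [hI]
    exact Ideal.subset_span ⟨r, s, j, k, h, rfl⟩
  have hgen : ∀ x ∈ {x : Q | ∃ r s j k, r ≠ s ∧ x = X r s j k}, Δ x ∈ R1 ⊔ R2 := by
    rintro x ⟨r, s, j, k, hrs, rfl⟩
    rw [key]
    refine Submodule.sum_mem _ fun l _ => Submodule.sum_mem _ fun p _ => ?_
    by_cases hp : r = p
    · subst hp
      exact Submodule.mem_sup_right (hmem2 _ _ (hXI r s l k hrs))
    · exact Submodule.mem_sup_left (hmem1 _ _ (hXI r p j l hp))
  intro q hq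
  rw [hI] at hq
  refine Submodule.span_induction hgen (by simp)
    (fun x y _ _ hx hy => by rw [map_add]; exact Submodule.add_mem _ hx hy)
    (fun r x _ hx => by rw [smul_eq_mul, map_mul]; exact hmul _ _ hx) hq
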